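/- arXiv:1511.05201 — 2 statements merged into one kernel-verified Lean document; each statement's English description precedes it below -/
import Mathlib

section
/- In the Bernoulli(p) group testing model, the probability that every one of the n-k nondefective items appears in at least one negative test equals E[(1 - q^M)^{n-k}], where q = 1-p and M ~ Binomial(T, q^k). -/
open MeasureTheory ENNReal Finset

open scoped Classical

namespace BernoulliGT

variable {p : ℝ≥0∞}

noncomputable def w (p : ℝ≥0∞) (b : Bool) : ℝ≥0∞ := cond b p (1 - p)

lemma w_sum (hp : p ≤ 1) : w p true + w p false = 1 := by
  simpa [w] using add_tsub_cancel_of_le hp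

lemma q_ne_top : (1 - p) ≠ ∞ := (tsub_le_self.trans_lt one_lt_top).ne

lemma master {α β : Type*} [Fintype α] [DecidableEq α] [Fintype β] [DecidableEq β]
    (g : α → β → ℝ≥0∞) :
    ∑ f : α → β, ∏ a, g a (f a) = ∏ a, ∑ b, g a b :=
  (Fintype.prod_sum g).symm

lemma sum_allFalse {α : Type*} [Fintype α] [DecidableEq α] (hp : p ≤ 1) (s : Finset α) :
    ∑ f : α → Bool, (if ∀ a ∈ s, f a = false then ∏ a, w p (f a) else 0)
      = (1 - p) ^ s.card := by
  have h : ∀ f : α → Bool,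
      (if ∀ a ∈ s, f a = false then ∏ a, w p (f a) else 0)
        = ∏ a, (if a ∈ s ∧ f a = true then 0 else w p (f a)) := by
    intro f
    by_cases hf : ∀ a ∈ s, f a = false
    · rw [if_pos hf]
      refine Finset.prod_congr rfl fun a _ => ?_
      rw [if_neg]
      rintro ⟨ha, hta⟩
      rw [hf a ha] at hta
      exact Bool.false_ne_true hta
    · rw [if_neg hf]
      push_neg at hf
      obtain ⟨a, ha, hfa⟩ := hf
      refine (Finset.prod_eq_zero (Finset.mem_univ a) ?_).symm
      rw [if_pos ⟨ha, by simpa using hfa⟩]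
  rw [Finset.sum_congr rfl fun f _ => h f,
    master fun a b => if a ∈ s ∧ b = true then 0 else w p b]
  have h2 : ∀ a : α, (∑ b : Bool, if a ∈ s ∧ b = true then 0 else w p b)
      = if a ∈ s then 1 - p else 1 := by
    intro a
    rw [Fintype.sum_bool]
    by_cases ha : a ∈ s
    · simp [ha, w]
    · simpa [ha] using w_sum hp
  rw [Finset.prod_congr rfl fun a _ => h2 a, Finset.prod_ite_mem, Finset.univ_inter,
    Finset.prod_const]

lemma sum_exists {α : Type*} [Fintype α] [DecidableEq α] (hp : p ≤ 1) (s : Finset α) :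
    ∑ f : α → Bool, (if ∃ a ∈ s, f a = true then ∏ a, w p (f a) else 0)
      = 1 - (1 - p) ^ s.card := by
  have htot :
      (∑ f : α → Bool, (if ∃ a ∈ s, f a = true then ∏ a, w p (f a) else 0))
        + ∑ f : α → Bool, (if ∀ a ∈ s, f a = false then ∏ a, w p (f a) else 0) = 1 := by
    rw [← Finset.sum_add_distrib]
    have h : ∀ f : α → Bool,
        (if ∃ a ∈ s, f a = true then ∏ a, w p (f a) else 0)
          + (if ∀ a ∈ s, f a = false then ∏ a, w p (f a) else 0) = ∏ a, w p (f a) := by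
      intro f
      by_cases hf : ∀ a ∈ s, f a = false
      · rw [if_pos hf, if_neg, zero_add]
        rintro ⟨a, ha, hta⟩
        rw [hf a ha] at hta
        exact Bool.false_ne_true hta
      · rw [if_neg hf, add_zero, if_pos]
        push_neg at hf
        obtain ⟨a, ha, hfa⟩ := hf
        exact ⟨a, ha, by simpa using hfa⟩
    rw [Finset.sum_congr rfl fun f _ => h f]
    calc ∑ f : α → Bool, ∏ a, w p (f a) = ∏ _a : α, ∑ b : Bool, w p b :=
          master fun _ b => w p b
      _ = 1 := by
          rw [Finset.prod_congr rfl fun (a : α) _ => (Fintype.sum_bool _).trans (w_sum hp)]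
          exact Finset.prod_const_one
  rw [sum_allFalse hp s] at htot
  exact ENNReal.eq_sub_of_add_eq (pow_ne_top q_ne_top) htot

lemma col_false {γ : Type*} [Fintype γ] [DecidableEq γ] (hp : p ≤ 1) :
    ∑ c : γ → Bool, (if ∀ j, c j = false then ∏ j, w p (c j) else 0)
      = (1 - p) ^ Fintype.card γ := by
  have h := sum_allFalse hp (Finset.univ : Finset γ)
  simpa using h

lemma col_exists {γ : Type*} [Fintype γ] [DecidableEq γ] (hp : p ≤ 1) :
    ∑ c : γ → Bool, (if ¬ (∀ j, c j = false) then ∏ j, w p (c j) else 0)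
      = 1 - (1 - p) ^ Fintype.card γ := by
  have h := sum_exists hp (Finset.univ : Finset γ)
  rw [Finset.card_univ] at h
  rw [← h]
  refine Finset.sum_congr rfl fun c _ => ?_
  refine if_congr ?_ rfl rfl
  simp [not_forall]

lemma block_sum {τ γ : Type*} [Fintype τ] [DecidableEq τ] [Fintype γ] [DecidableEq γ]
    (hp : p ≤ 1) (S : Finset τ) :
    ∑ x : τ → γ → Bool,
        (if ∀ t, ((∀ j, x t j = false) ↔ t ∈ S) then ∏ t, ∏ j, w p (x t j) else 0)
      = ((1 - p) ^ Fintype.card γ) ^ S.card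
          * (1 - (1 - p) ^ Fintype.card γ) ^ (Fintype.card τ - S.card) := by
  set G : τ → (γ → Bool) → ℝ≥0∞ :=
    fun t c => if ((∀ j, c j = false) ↔ t ∈ S) then ∏ j, w p (c j) else 0 with hG
  have h : ∀ x : τ → γ → Bool,
      (if ∀ t, ((∀ j, x t j = false) ↔ t ∈ S) then ∏ t, ∏ j, w p (x t j) else 0)
        = ∏ t, G t (x t) := by
    intro x
    simp only [hG]
    by_cases hx : ∀ t, ((∀ j, x t j = false) ↔ t ∈ S)
    · rw [if_pos hx]
      exact Finset.prod_congr rfl fun t _ => (if_pos (hx t)).symm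
    · rw [if_neg hx]
      obtain ⟨t, ht⟩ := not_forall.1 hx
      refine (Finset.prod_eq_zero (Finset.mem_univ t) ?_).symm
      exact if_neg ht
  refine (Finset.sum_congr rfl fun x _ => h x).trans ((master G).trans ?_)
  have h2 : ∀ t : τ,
      (∑ c : γ → Bool, G t c)
        = if t ∈ S then (1 - p) ^ Fintype.card γ else 1 - (1 - p) ^ Fintype.card γ := by
    intro t
    simp only [hG]
    by_cases ht : t ∈ S
    · rw [if_pos ht, ← col_false hp]
      exact Finset.sum_congr rfl fun c _ => if_congr (by simp [ht]) rfl rfl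
    · rw [if_neg ht, ← col_exists hp]
      exact Finset.sum_congr rfl fun c _ => if_congr (by simp [ht]) rfl rfl
  rw [Finset.prod_congr rfl fun t _ => h2 t, Finset.prod_ite, Finset.prod_const,
    Finset.prod_const]
  have e1 : (univ.filter fun t => t ∈ S) = S := by ext t; simp
  have e2 : (univ.filter fun t => t ∉ S) = Sᶜ := by ext t; simp
  rw [e1, e2, Finset.card_compl]

lemma free_block {ι τ : Type*} [Fintype ι] [DecidableEq ι] [Fintype τ] [DecidableEq τ]
    (hp : p ≤ 1) (S : Finset τ) :
    ∑ y : ι → τ → Bool,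
        (if ∀ i, ∃ t ∈ S, y i t = true then ∏ i, ∏ t, w p (y i t) else 0)
      = (1 - (1 - p) ^ S.card) ^ Fintype.card ι := by
  set G : ι → (τ → Bool) → ℝ≥0∞ :=
    fun _ r => if ∃ t ∈ S, r t = true then ∏ t, w p (r t) else 0 with hG
  have h : ∀ y : ι → τ → Bool,
      (if ∀ i, ∃ t ∈ S, y i t = true then ∏ i, ∏ t, w p (y i t) else 0)
        = ∏ i, G i (y i) := by
    intro y
    simp only [hG]
    by_cases hy : ∀ i, ∃ t ∈ S, y i t = true
    · rw [if_pos hy]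
      exact Finset.prod_congr rfl fun i _ => (if_pos (hy i)).symm
    · rw [if_neg hy]
      push_neg at hy
      obtain ⟨i, hi⟩ := hy
      refine (Finset.prod_eq_zero (Finset.mem_univ i) ?_).symm
      rw [if_neg]
      rintro ⟨t, ht, h2⟩
      exact hi t ht h2
  refine (Finset.sum_congr rfl fun y _ => h y).trans ((master G).trans ?_)
  have h2 : ∀ i : ι, (∑ r : τ → Bool, G i r) = 1 - (1 - p) ^ S.card := by
    intro i
    simp only [hG]
    exact sum_exists hp S
  rw [Finset.prod_congr rfl fun i _ => h2 i, Finset.prod_const, Finset.card_univ]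

lemma K_side {τ γ : Type*} [Fintype τ] [DecidableEq τ] [Fintype γ] [DecidableEq γ]
    (hp : p ≤ 1) (g : ℕ → ℝ≥0∞) :
    ∑ x : τ → γ → Bool,
        (∏ t, ∏ j, w p (x t j)) * g ((univ.filter fun t => ∀ j, x t j = false).card)
      = ∑ m ∈ range (Fintype.card τ + 1),
          ((Fintype.card τ).choose m : ℝ≥0∞) * ((1 - p) ^ Fintype.card γ) ^ m
            * (1 - (1 - p) ^ Fintype.card γ) ^ (Fintype.card τ - m)
            * g m := by
  have hmaps : ∀ x ∈ (univ : Finset (τ → γ → Bool)),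
      (univ.filter fun t => ∀ j, x t j = false) ∈ (univ : Finset τ).powerset :=
    fun x _ => Finset.mem_powerset.2 (Finset.filter_subset _ _)
  rw [← Finset.sum_fiberwise_of_maps_to hmaps]
  have hinner : ∀ S ∈ (univ : Finset τ).powerset,
      (∑ x ∈ univ.filter (fun x : τ → γ → Bool =>
          (univ.filter fun t => ∀ j, x t j = false) = S),
        (∏ t, ∏ j, w p (x t j)) * g ((univ.filter fun t => ∀ j, x t j = false).card))
      = ((1 - p) ^ Fintype.card γ) ^ S.card
          * (1 - (1 - p) ^ Fintype.card γ) ^ (Fintype.card τ - S.card) * g S.card := by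
    intro S _
    have h1 : ∀ x ∈ univ.filter (fun x : τ → γ → Bool =>
        (univ.filter fun t => ∀ j, x t j = false) = S),
        (∏ t, ∏ j, w p (x t j)) * g ((univ.filter fun t => ∀ j, x t j = false).card)
          = (∏ t, ∏ j, w p (x t j)) * g S.card := by
      intro x hx
      rw [(Finset.mem_filter.1 hx).2]
    rw [Finset.sum_congr rfl h1, ← Finset.sum_mul, Finset.sum_filter]
    congr 1
    rw [← block_sum hp S]
    refine Finset.sum_congr rfl fun x _ => if_congr ?_ rfl rfl
    simp [Finset.ext_iff]
  have hpc := Finset.sum_powerset_apply_card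
    (f := fun m => ((1 - p) ^ Fintype.card γ) ^ m
      * (1 - (1 - p) ^ Fintype.card γ) ^ (Fintype.card τ - m) * g m)
    (x := (univ : Finset τ))
  rw [Finset.card_univ] at hpc
  refine (Finset.sum_congr rfl hinner).trans (hpc.trans ?_)
  refine Finset.sum_congr rfl fun m _ => ?_
  rw [nsmul_eq_mul]
  ring

end BernoulliGT

open BernoulliGT in
/-- In the Bernoulli(p) group testing model, the probability that every one of the
`n - k` nondefective items appears in at least one negative test equals
`E[(1 - q^M)^{n-k}]`, where `q = 1 - p` and `M ~ Binomial(T, q^k)`. -/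
theorem bernoulli_group_testing_comp_success_prob
    (n T k : ℕ) (p : ℝ≥0∞) (hp : p ≤ 1) (K : Finset (Fin n)) (hK : K.card = k)
    (μ : Measure ((Fin n × Fin T) → Bool))
    (hμ : μ = Measure.pi fun _ => (PMF.bernoulli p.toNNReal (by simpa using ENNReal.toNNReal_mono ENNReal.one_ne_top hp)).toMeasure) :
    μ {ω | ∀ i : Fin n, i ∉ K →
        ∃ t : Fin T, (∀ j ∈ K, ω (j, t) = false) ∧ ω (i, t) = true} =
      ∑ m ∈ Finset.range (T + 1),
        (T.choose m : ℝ≥0∞) * ((1 - p) ^ k) ^ m * (1 - (1 - p) ^ k) ^ (T - m) *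
          (1 - (1 - p) ^ m) ^ (n - k) := by
  subst hμ
  set E : Set ((Fin n × Fin T) → Bool) := {ω | ∀ i : Fin n, i ∉ K →
      ∃ t : Fin T, (∀ j ∈ K, ω (j, t) = false) ∧ ω (i, t) = true} with hE
  -- measure of a singleton
  have hsingle : ∀ ω : (Fin n × Fin T) → Bool,
      (Measure.pi fun _ => (PMF.bernoulli p.toNNReal (by simpa using ENNReal.toNNReal_mono ENNReal.one_ne_top hp)).toMeasure) {ω} = ∏ x, w p (ω x) := by
    intro ω
    rw [← Set.univ_pi_singleton ω, Measure.pi_pi]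
    refine Finset.prod_congr rfl fun x _ => ?_
    rw [PMF.toMeasure_apply_singleton _ _ (measurableSet_singleton _)]
    have hpt : ((p.toNNReal : NNReal) : ℝ≥0∞) = p := ENNReal.coe_toNNReal (ne_top_of_le_ne_top one_ne_top hp)
    simp only [PMF.bernoulli, PMF.ofFintype_apply, hpt]
    rfl
  -- measure of the event as a finite sum
  have hmeas : (Measure.pi fun _ => (PMF.bernoulli p.toNNReal (by simpa using ENNReal.toNNReal_mono ENNReal.one_ne_top hp)).toMeasure) E
      = ∑ ω : (Fin n × Fin T) → Bool, (if ω ∈ E then ∏ x, w p (ω x) else 0) := by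
    have hU : E = ⋃ ω ∈ (univ.filter (· ∈ E) : Finset ((Fin n × Fin T) → Bool)),
        ({ω} : Set ((Fin n × Fin T) → Bool)) := by
      ext ω
      simp
    have hdisj : Set.PairwiseDisjoint
        (↑(univ.filter (· ∈ E) : Finset ((Fin n × Fin T) → Bool)))
        (fun ω => ({ω} : Set ((Fin n × Fin T) → Bool))) :=
      fun a _ b _ hab => Set.disjoint_singleton.2 hab
    have hB := measure_biUnion_finset
      (μ := Measure.pi fun _ => (PMF.bernoulli p.toNNReal (by simpa using ENNReal.toNNReal_mono ENNReal.one_ne_top hp)).toMeasure) hdisj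
      (fun ω _ => measurableSet_singleton ω)
    calc (Measure.pi fun _ => (PMF.bernoulli p.toNNReal (by simpa using ENNReal.toNNReal_mono ENNReal.one_ne_top hp)).toMeasure) E
        = (Measure.pi fun _ => (PMF.bernoulli p.toNNReal (by simpa using ENNReal.toNNReal_mono ENNReal.one_ne_top hp)).toMeasure)
            (⋃ ω ∈ (univ.filter (· ∈ E) : Finset ((Fin n × Fin T) → Bool)),
              ({ω} : Set ((Fin n × Fin T) → Bool))) := by conv_lhs => rw [hU]
      _ = ∑ ω ∈ (univ.filter (· ∈ E) : Finset ((Fin n × Fin T) → Bool)),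
            (Measure.pi fun _ => (PMF.bernoulli p.toNNReal (by simpa using ENNReal.toNNReal_mono ENNReal.one_ne_top hp)).toMeasure) {ω} := hB
      _ = ∑ ω : (Fin n × Fin T) → Bool, (if ω ∈ E then ∏ x, w p (ω x) else 0) := by
          rw [Finset.sum_congr rfl fun ω _ => hsingle ω, Finset.sum_filter]
  rw [hmeas]
  -- curry
  set F : (Fin n → Fin T → Bool) → ℝ≥0∞ := fun ρ =>
    if (∀ i, i ∉ K → ∃ t : Fin T, (∀ j ∈ K, ρ j t = false) ∧ ρ i t = true)
      then ∏ i, ∏ t, w p (ρ i t) else 0 with hF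
  have stepA : (∑ ω : (Fin n × Fin T) → Bool, (if ω ∈ E then ∏ x, w p (ω x) else 0))
      = ∑ ρ : Fin n → Fin T → Bool, F ρ := by
    rw [← Equiv.sum_comp (Equiv.curry (Fin n) (Fin T) Bool) F]
    refine Finset.sum_congr rfl fun ω _ => ?_
    show (if ω ∈ E then ∏ x, w p (ω x) else 0)
        = (if (∀ i, i ∉ K → ∃ t : Fin T, (∀ j ∈ K, ω (j, t) = false) ∧ ω (i, t) = true)
            then ∏ i, ∏ t, w p (ω (i, t)) else 0)
    exact if_congr Iff.rfl (Fintype.prod_prod_type _) rfl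
  rw [stepA]
  -- split into defective / nondefective rows
  set e2 := Equiv.piEquivPiSubtypeProd (fun i : Fin n => i ∈ K) (fun _ => Fin T → Bool)
    with he2
  rw [← Equiv.sum_comp e2.symm F, Fintype.sum_prod_type]
  set Sneg : ({i : Fin n // i ∈ K} → Fin T → Bool) → Finset (Fin T) :=
    fun a => univ.filter fun t => ∀ j : {i : Fin n // i ∈ K}, a j t = false with hSneg
  have hsplit : ∀ (a : {i : Fin n // i ∈ K} → Fin T → Bool) (b : {i : Fin n // ¬ i ∈ K} → Fin T → Bool),
      F (e2.symm (a, b))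
        = (if (∀ i : {i : Fin n // ¬ i ∈ K}, ∃ t ∈ Sneg a, b i t = true)
            then (∏ j : {i : Fin n // i ∈ K}, ∏ t, w p (a j t)) * ∏ i : {i : Fin n // ¬ i ∈ K}, ∏ t, w p (b i t) else 0) := by
    intro a b
    have hρK : ∀ (j : {i : Fin n // i ∈ K}) (t : Fin T), e2.symm (a, b) j.1 t = a j t := by
      intro j t
      simp [he2, Equiv.piEquivPiSubtypeProd, j.2]
    have hρN : ∀ (i : {i : Fin n // ¬ i ∈ K}) (t : Fin T), e2.symm (a, b) i.1 t = b i t := by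
      intro i t
      simp [he2, Equiv.piEquivPiSubtypeProd, i.2]
    rw [hF]
    refine if_congr ?_ ?_ rfl
    · constructor
      · intro h i
        obtain ⟨t, h1, h2⟩ := h i.1 i.2
        refine ⟨t, Finset.mem_filter.2 ⟨Finset.mem_univ _, fun j => ?_⟩, ?_⟩
        · rw [← hρK j t]; exact h1 j.1 j.2
        · rw [← hρN i t]; exact h2
      · intro h i hi
        obtain ⟨t, ht, h2⟩ := h ⟨i, hi⟩
        have hall := (Finset.mem_filter.1 ht).2
        refine ⟨t, fun j hj => ?_, ?_⟩
        · rw [show (j : Fin n) = (⟨j, hj⟩ : {i : Fin n // i ∈ K}).1 from rfl, hρK ⟨j, hj⟩ t]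
          exact hall ⟨j, hj⟩
        · rw [show (i : Fin n) = (⟨i, hi⟩ : {i : Fin n // ¬ i ∈ K}).1 from rfl, hρN ⟨i, hi⟩ t]
          exact h2
    · rw [← Fintype.prod_subtype_mul_prod_subtype (fun i : Fin n => i ∈ K)
        (fun i => ∏ t, w p (e2.symm (a, b) i t))]
      congr 1
      · exact Finset.prod_congr (Finset.eq_univ_iff_forall.2 fun x => by simp)
          fun j _ => Finset.prod_congr rfl fun t _ => by rw [hρK j t]
      · exact Finset.prod_congr (Finset.eq_univ_iff_forall.2 fun x => by simp)
          fun i _ => Finset.prod_congr rfl fun t _ => by rw [hρN i t]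
  rw [Finset.sum_congr rfl fun a _ => Finset.sum_congr rfl fun b _ => hsplit a b]
  -- inner sum over nondefective rows
  have hinner : ∀ a : {i : Fin n // i ∈ K} → Fin T → Bool,
      (∑ b : {i : Fin n // ¬ i ∈ K} → Fin T → Bool, if (∀ i : {i : Fin n // ¬ i ∈ K}, ∃ t ∈ Sneg a, b i t = true)
          then (∏ j : {i : Fin n // i ∈ K}, ∏ t, w p (a j t)) * ∏ i : {i : Fin n // ¬ i ∈ K}, ∏ t, w p (b i t) else 0)
        = (∏ j : {i : Fin n // i ∈ K}, ∏ t, w p (a j t))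
            * (1 - (1 - p) ^ (Sneg a).card) ^ Fintype.card {i : Fin n // ¬ i ∈ K} := by
    intro a
    have h1 : ∀ b : {i : Fin n // ¬ i ∈ K} → Fin T → Bool,
        (if (∀ i : {i : Fin n // ¬ i ∈ K}, ∃ t ∈ Sneg a, b i t = true)
          then (∏ j : {i : Fin n // i ∈ K}, ∏ t, w p (a j t)) * ∏ i : {i : Fin n // ¬ i ∈ K}, ∏ t, w p (b i t) else 0)
        = (∏ j : {i : Fin n // i ∈ K}, ∏ t, w p (a j t))
            * (if (∀ i : {i : Fin n // ¬ i ∈ K}, ∃ t ∈ Sneg a, b i t = true)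
                then ∏ i : {i : Fin n // ¬ i ∈ K}, ∏ t, w p (b i t) else 0) := by
      intro b
      rw [mul_ite, mul_zero]
    rw [Finset.sum_congr rfl fun b _ => h1 b, ← Finset.mul_sum]
    congr 1
    convert free_block hp (Sneg a)
  rw [Finset.sum_congr rfl fun a _ => hinner a]
  -- transpose the defective block and apply the binomial grouping
  set g : ℕ → ℝ≥0∞ := fun m => (1 - (1 - p) ^ m) ^ Fintype.card {i : Fin n // ¬ i ∈ K} with hg
  set H : (Fin T → {i : Fin n // i ∈ K} → Bool) → ℝ≥0∞ := fun x =>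
    (∏ t, ∏ j, w p (x t j)) * g ((univ.filter fun t => ∀ j : {i : Fin n // i ∈ K}, x t j = false).card)
    with hH
  have htrans : ∀ a : {i : Fin n // i ∈ K} → Fin T → Bool,
      (∏ j : {i : Fin n // i ∈ K}, ∏ t, w p (a j t)) * (1 - (1 - p) ^ (Sneg a).card) ^ Fintype.card {i : Fin n // ¬ i ∈ K}
        = H (Equiv.piComm (fun (_ : {i : Fin n // i ∈ K}) (_ : Fin T) => Bool) a) := by
    intro a
    rw [hH]
    show (∏ j : {i : Fin n // i ∈ K}, ∏ t, w p (a j t)) * (1 - (1 - p) ^ (Sneg a).card) ^ Fintype.card {i : Fin n // ¬ i ∈ K}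
      = (∏ t, ∏ j : {i : Fin n // i ∈ K}, w p (a j t))
          * g ((univ.filter fun t => ∀ j : {i : Fin n // i ∈ K}, a j t = false).card)
    rw [Finset.prod_comm, hg, hSneg]
  rw [Finset.sum_congr rfl fun a _ => htrans a,
    Equiv.sum_comp (Equiv.piComm fun (_ : {i : Fin n // i ∈ K}) (_ : Fin T) => Bool) H, hH]
  rw [K_side hp g]
  have hcK : Fintype.card {i : Fin n // i ∈ K} = k := (Fintype.card_coe K).trans hK
  have hcN : Fintype.card {i : Fin n // ¬ i ∈ K} = n - k := by
    rw [Fintype.card_subtype_compl, Fintype.card_fin, Fintype.card_coe, hK]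
  rw [hg]
  refine Finset.sum_congr (by rw [Fintype.card_fin]) fun m hm => ?_
  rw [hcK, hcN, Fintype.card_fin]
end

section
/- For k ≥ 2, T ∈ ℕ, and r ∈ (0, 1/(2k)], the inclusion–exclusion expansion gives: probability that some defective is never uniquely contained, P(⋃_{i∈K} A_iᶜ) = -∑_{j=1}^{k} (-1)^j (k choose j)(1 - j r)^T ≥ k(1-r)^T (1 - (k/2) ((1-2r)/(1-r))^T). -/
open MeasureTheory Finset

/-- For `k ≥ 2` and `r ∈ (0, 1/(2k)]`, if `A_i` are events with
`P(⋂_{i∈J} A_iᶜ) = (1 - |J| r)^T` for every nonempty `J`, then inclusion–exclusion gives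
`P(⋃ A_iᶜ) = -∑_{j=1}^k (-1)^j (k choose j)(1 - j r)^T
  ≥ k (1-r)^T (1 - (k/2) ((1-2r)/(1-r))^T)`. -/
theorem prob_union_compl_lower_bound {Ω : Type*} [MeasurableSpace Ω]
    (μ : Measure Ω) [IsProbabilityMeasure μ] (k T : ℕ) (hk : 2 ≤ k) (r : ℝ)
    (hr0 : 0 < r) (hr1 : r ≤ 1 / (2 * k))
    (A : Fin k → Set Ω) (hA : ∀ i, MeasurableSet (A i))
    (hJ : ∀ J : Finset (Fin k), J.Nonempty →
      μ (⋂ i ∈ J, (A i)ᶜ) = ENNReal.ofReal ((1 - (J.card : ℝ) * r) ^ T)) :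
    (μ (⋃ i, (A i)ᶜ)).toReal =
      -∑ j ∈ Finset.Icc 1 k,
        (-1 : ℝ) ^ j * (k.choose j : ℝ) * (1 - (j : ℝ) * r) ^ T ∧
    (k : ℝ) * (1 - r) ^ T * (1 - (k : ℝ) / 2 * ((1 - 2 * r) / (1 - r)) ^ T) ≤
      -∑ j ∈ Finset.Icc 1 k,
        (-1 : ℝ) ^ j * (k.choose j : ℝ) * (1 - (j : ℝ) * r) ^ T := by
  classical
  have hkpos : (0:ℝ) < k := by
    have : 0 < k := by omega
    exact_mod_cast this
  have hk2 : (2:ℝ) ≤ k := by exact_mod_cast hk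
  have hkr : (k:ℝ) * r ≤ 1/2 := by
    have h1 : (k:ℝ) * r ≤ (k:ℝ) * (1/(2*k)) := mul_le_mul_of_nonneg_left hr1 hkpos.le
    have h2 : (k:ℝ) * (1/(2*(k:ℝ))) = 1/2 := by field_simp
    linarith [h1, h2.le]
  have h2r : 2 * r ≤ 1/2 := by nlinarith
  have hr14 : r < 1 := by nlinarith
  -- measurability
  have hBm : ∀ i, MeasurableSet ((A i)ᶜ) := fun i => (hA i).compl
  have hMeas : ∀ J : Finset (Fin k), MeasurableSet (⋂ i ∈ J, (A i)ᶜ) := fun J =>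
    MeasurableSet.biInter J.countable_toSet (fun i _ => hBm i)
  have hUm : MeasurableSet (⋃ i, (A i)ᶜ) := MeasurableSet.iUnion hBm
  -- measure values
  have hval : ∀ J : Finset (Fin k), (μ (⋂ i ∈ J, (A i)ᶜ)).toReal = (1 - (J.card:ℝ) * r) ^ T := by
    intro J
    rcases J.eq_empty_or_nonempty with rfl | hne
    · simp
    · rw [hJ J hne, ENNReal.toReal_ofReal]
      have hcard : (J.card : ℝ) ≤ k := by exact_mod_cast J.card_le_univ.trans_eq (by simp)
      have : (J.card : ℝ) * r ≤ (k:ℝ) * r := mul_le_mul_of_nonneg_right hcard hr0.le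
      have h1 : (0:ℝ) ≤ 1 - (J.card:ℝ) * r := by linarith
      positivity
  -- integrability of indicators
  have hint : ∀ S : Set Ω, MeasurableSet S → Integrable (S.indicator (1 : Ω → ℝ)) μ := by
    intro S hS
    exact (integrable_indicator_iff hS).2 (integrableOn_const (measure_ne_top μ S))
  -- pointwise indicator lemmas
  have hind : ∀ (J : Finset (Fin k)) (ω : Ω),
      Set.indicator (⋂ i ∈ J, (A i)ᶜ) (1 : Ω → ℝ) ω =
        if J ⊆ univ.filter (fun i => ω ∈ (A i)ᶜ) then 1 else 0 := by
    intro J ω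
    have h : (ω ∈ ⋂ i ∈ J, (A i)ᶜ) ↔ J ⊆ univ.filter (fun i => ω ∈ (A i)ᶜ) := by
      simp [Set.mem_iInter, Finset.subset_iff]
    simp [Set.indicator_apply, h]
  have hindU : ∀ ω : Ω, Set.indicator (⋃ i, (A i)ᶜ) (1 : Ω → ℝ) ω =
      if (univ.filter (fun i => ω ∈ (A i)ᶜ)).Nonempty then 1 else 0 := by
    intro ω
    have h : (ω ∈ ⋃ i, (A i)ᶜ) ↔ (univ.filter (fun i => ω ∈ (A i)ᶜ)).Nonempty := by
      simp [Set.mem_iUnion, Finset.filter_nonempty_iff]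
    simp [Set.indicator_apply, h]
  -- counting lemma
  have hcount : ∀ (j : ℕ) (ω : Ω),
      ∑ J ∈ powersetCard j (univ : Finset (Fin k)),
        Set.indicator (⋂ i ∈ J, (A i)ᶜ) (1 : Ω → ℝ) ω =
      (((univ.filter (fun i => ω ∈ (A i)ᶜ)).card.choose j : ℕ) : ℝ) := by
    intro j ω
    simp only [hind]
    rw [Finset.sum_boole]
    congr 1
    have he : (powersetCard j (univ : Finset (Fin k))).filter
        (· ⊆ univ.filter (fun i => ω ∈ (A i)ᶜ)) =
        powersetCard j (univ.filter (fun i => ω ∈ (A i)ᶜ)) := by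
      ext J
      simp only [Finset.mem_filter, Finset.mem_powersetCard]
      constructor
      · rintro ⟨⟨-, h2⟩, h3⟩; exact ⟨h3, h2⟩
      · rintro ⟨h1, h2⟩; exact ⟨⟨Finset.subset_univ J, h2⟩, h1⟩
    rw [he, Finset.card_powersetCard]
  -- pointwise inclusion-exclusion
  have hptEq : ∀ ω : Ω, Set.indicator (⋃ i, (A i)ᶜ) (1 : Ω → ℝ) ω =
      1 - ∑ J ∈ (univ : Finset (Fin k)).powerset,
        (-1:ℝ)^J.card * Set.indicator (⋂ i ∈ J, (A i)ᶜ) (1 : Ω → ℝ) ω := by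
    intro ω
    set s := univ.filter (fun i => ω ∈ (A i)ᶜ) with hs
    have h1 : ∑ J ∈ (univ : Finset (Fin k)).powerset,
        (-1:ℝ)^J.card * Set.indicator (⋂ i ∈ J, (A i)ᶜ) (1 : Ω → ℝ) ω =
        ∑ J ∈ s.powerset, (-1:ℝ)^J.card := by
      simp only [hind, mul_ite, mul_one, mul_zero, ← hs]
      rw [← Finset.sum_filter]
      congr 1
      ext J
      simp only [Finset.mem_filter, Finset.mem_powerset]
      exact ⟨fun h => h.2, fun h => ⟨Finset.subset_univ J, h⟩⟩
    have h2 : ∑ J ∈ s.powerset, (-1:ℝ)^J.card = if s = ∅ then 1 else 0 := by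
      have hz := Finset.sum_powerset_neg_one_pow_card (x := s)
      have : ((∑ m ∈ s.powerset, (-1:ℤ)^m.card : ℤ) : ℝ) = ∑ J ∈ s.powerset, (-1:ℝ)^J.card := by
        push_cast; rfl
      rw [← this, hz]
      split_ifs <;> simp
    rw [h1, h2, hindU ω, ← hs]
    by_cases h : s = ∅
    · simp [h]
    · simp [h, Finset.nonempty_iff_ne_empty]
  -- integrate the pointwise identity
  have hIntEq : (μ (⋃ i, (A i)ᶜ)).toReal =
      1 - ∑ J ∈ (univ : Finset (Fin k)).powerset,
        (-1:ℝ)^J.card * (1 - (J.card:ℝ) * r) ^ T := by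
    rw [← measureReal_def, ← integral_indicator_one hUm]
    rw [integral_congr_ae (Filter.Eventually.of_forall hptEq)]
    rw [integral_sub (integrable_const 1)
      (integrable_finset_sum _ (fun J _ => ((hint _ (hMeas J)).const_mul _)))]
    rw [integral_finset_sum _ (fun J _ => ((hint _ (hMeas J)).const_mul _))]
    simp only [integral_const_mul, integral_indicator_one (hMeas _), measureReal_def, hval]
    simp [measure_univ]
  -- rewrite as sum over Icc 1 k
  have hsum : ∑ J ∈ (univ : Finset (Fin k)).powerset,
      (-1:ℝ)^J.card * (1 - (J.card:ℝ) * r) ^ T =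
      1 + ∑ j ∈ Finset.Icc 1 k, (-1:ℝ)^j * (k.choose j : ℝ) * (1 - (j:ℝ) * r) ^ T := by
    rw [Finset.sum_powerset_apply_card (f := fun m => (-1:ℝ)^m * (1 - (m:ℝ)*r)^T)]
    have hcu : (univ : Finset (Fin k)).card = k := by simp
    rw [hcu]
    have hr' : Finset.range (k+1) = insert 0 (Finset.Icc 1 k) := by
      ext x; simp; omega
    rw [hr', Finset.sum_insert (by simp)]
    simp only [nsmul_eq_mul]
    rw [show ((k.choose 0 : ℕ):ℝ) * ((-1:ℝ)^0 * (1 - (0:ℕ)*r)^T) = 1 by simp]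
    congr 1
    refine Finset.sum_congr rfl fun j _ => by ring
  have hEq : (μ (⋃ i, (A i)ᶜ)).toReal =
      -∑ j ∈ Finset.Icc 1 k, (-1:ℝ)^j * (k.choose j : ℝ) * (1 - (j:ℝ) * r) ^ T := by
    rw [hIntEq, hsum]; ring
  refine ⟨hEq, ?_⟩
  -- Bonferroni lower bound
  have hBon : (k:ℝ) * (1-r)^T - (k.choose 2 : ℝ) * (1-2*r)^T ≤ (μ (⋃ i, (A i)ᶜ)).toReal := by
    rw [← measureReal_def, ← integral_indicator_one hUm]
    have hi1 : Integrable (fun ω => ∑ J ∈ powersetCard 1 (univ : Finset (Fin k)),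
        Set.indicator (⋂ i ∈ J, (A i)ᶜ) (1 : Ω → ℝ) ω) μ :=
      integrable_finset_sum _ (fun J _ => hint _ (hMeas J))
    have hi2 : Integrable (fun ω => ∑ J ∈ powersetCard 2 (univ : Finset (Fin k)),
        Set.indicator (⋂ i ∈ J, (A i)ᶜ) (1 : Ω → ℝ) ω) μ :=
      integrable_finset_sum _ (fun J _ => hint _ (hMeas J))
    have hle : ∀ ω : Ω,
        (∑ J ∈ powersetCard 1 (univ : Finset (Fin k)),
          Set.indicator (⋂ i ∈ J, (A i)ᶜ) (1 : Ω → ℝ) ω) -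
        (∑ J ∈ powersetCard 2 (univ : Finset (Fin k)),
          Set.indicator (⋂ i ∈ J, (A i)ᶜ) (1 : Ω → ℝ) ω) ≤
        Set.indicator (⋃ i, (A i)ᶜ) (1 : Ω → ℝ) ω := by
      intro ω
      rw [hcount 1 ω, hcount 2 ω, hindU ω]
      set n := (univ.filter (fun i => ω ∈ (A i)ᶜ)).card with hn
      have hch : ∀ m : ℕ, m ≤ m.choose 2 + 1 := by
        intro m
        cases m with
        | zero => simp
        | succ p =>
          rw [Nat.choose_succ_succ, Nat.choose_one_right]
          omega
      by_cases h : (univ.filter (fun i => ω ∈ (A i)ᶜ)).Nonempty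
      · rw [if_pos h]
        have := hch n
        have hc : ((n:ℝ)) ≤ (n.choose 2 : ℝ) + 1 := by exact_mod_cast this
        rw [Nat.choose_one_right]
        linarith
      · rw [if_neg h]
        have hn0 : n = 0 := by
          rw [hn, Finset.card_eq_zero, ← Finset.not_nonempty_iff_eq_empty]
          exact h
        simp [hn0]
    calc (k:ℝ) * (1-r)^T - (k.choose 2 : ℝ) * (1-2*r)^T
        = ∫ ω, ((∑ J ∈ powersetCard 1 (univ : Finset (Fin k)),
            Set.indicator (⋂ i ∈ J, (A i)ᶜ) (1 : Ω → ℝ) ω) -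
          (∑ J ∈ powersetCard 2 (univ : Finset (Fin k)),
            Set.indicator (⋂ i ∈ J, (A i)ᶜ) (1 : Ω → ℝ) ω)) ∂μ := by
          rw [integral_sub hi1 hi2, integral_finset_sum _ (fun J _ => hint _ (hMeas J)),
            integral_finset_sum _ (fun J _ => hint _ (hMeas J))]
          have e1 : ∀ j : ℕ, ∑ J ∈ powersetCard j (univ : Finset (Fin k)),
              ∫ ω, Set.indicator (⋂ i ∈ J, (A i)ᶜ) (1 : Ω → ℝ) ω ∂μ =
              (k.choose j : ℝ) * (1 - (j:ℝ)*r)^T := by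
            intro j
            have : ∀ J ∈ powersetCard j (univ : Finset (Fin k)),
                ∫ ω, Set.indicator (⋂ i ∈ J, (A i)ᶜ) (1 : Ω → ℝ) ω ∂μ = (1 - (j:ℝ)*r)^T := by
              intro J hJ'
              rw [integral_indicator_one (hMeas J), measureReal_def, hval J,
                (Finset.mem_powersetCard.1 hJ').2]
            rw [Finset.sum_congr rfl this, Finset.sum_const, Finset.card_powersetCard]
            simp [nsmul_eq_mul]
          rw [e1 1, e1 2]
          norm_num
      _ ≤ ∫ ω, Set.indicator (⋃ i, (A i)ᶜ) (1 : Ω → ℝ) ω ∂μ :=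
          integral_mono (hi1.sub hi2) (hint _ hUm) hle
  rw [← hEq]
  refine le_trans ?_ hBon
  -- algebra: k(1-r)^T (1 - k/2 ((1-2r)/(1-r))^T) = k(1-r)^T - k²/2 (1-2r)^T ≤ ...
  have h1r : (0:ℝ) < 1 - r := by linarith
  have h12r : (0:ℝ) ≤ 1 - 2*r := by linarith
  have hpow : ((1 - 2*r)/(1-r))^T * (1-r)^T = (1-2*r)^T := by
    rw [div_pow, div_mul_cancel₀]
    positivity
  have hid : (k : ℝ) * (1 - r) ^ T * (1 - (k : ℝ) / 2 * ((1 - 2 * r) / (1 - r)) ^ T) =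
      (k:ℝ) * (1-r)^T - (k:ℝ)^2/2 * (1-2*r)^T := by
    have : (k : ℝ) * (1 - r) ^ T * ((k : ℝ) / 2 * ((1 - 2 * r) / (1 - r)) ^ T) =
        (k:ℝ)^2/2 * (((1 - 2*r)/(1-r))^T * (1-r)^T) := by ring
    rw [mul_sub, mul_one, this, hpow]
  rw [hid]
  have hch2 : (k.choose 2 : ℝ) = (k:ℝ) * ((k:ℝ) - 1) / 2 := Nat.cast_choose_two (K := ℝ) k
  have hle2 : (k.choose 2 : ℝ) ≤ (k:ℝ)^2/2 := by rw [hch2]; nlinarith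
  have hpnn : (0:ℝ) ≤ (1-2*r)^T := by positivity
  nlinarith [mul_le_mul_of_nonneg_right hle2 hpnn]
end
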